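/- Let d ≥ 3, let S be a multiset of nonnegative integers not all zero, and let G be a finite connected non-bipartite d-regular graph with girth greater than 3·max(S). Then the polygraph G_S is connected and non-bipartite. -/

import Mathlib

open scoped Classical
open Finset Polynomial

noncomputable section

namespace PaperStmt

variable {V : Type}

/-- The degree of a vertex in a finite simple graph. -/
def degR [Fintype V] (G : SimpleGraph V) (v : V) : ℕ :=
  (Finset.univ.filter (fun u => G.Adj v u)).card

/-- The link of a vertex: the subgraph induced on the neighbor set. -/
def link (G : SimpleGraph V) (v : V) : SimpleGraph (G.neighborSet v) :=
  SimpleGraph.induce (G.neighborSet v) G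

/-- `G` is `(a,b)`-regular: `a`-regular, and the link of every vertex is `b`-regular. -/
def IsABRegular [Fintype V] (G : SimpleGraph V) (a b : ℕ) : Prop :=
  (∀ v, degR G v = a) ∧ ∀ v : V, ∀ u : G.neighborSet v, degR (link G v) u = b

/-- The adjacency matrix over `ℝ`. -/
def adjMat [Fintype V] (G : SimpleGraph V) : Matrix V V ℝ :=
  Matrix.of fun u v => if G.Adj u v then (1 : ℝ) else 0

/-- The eigenvalues of the adjacency matrix (with multiplicity), in decreasing order,
so that `λ_k = (eigList G).getD (k-1) 0`. -/
def eigList [Fintype V] [DecidableEq V] (G : SimpleGraph V) : List ℝ :=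
  (((adjMat G).charpoly.roots).sort (· ≤ ·)).reverse

/-- `λ₂(G)`, the second largest adjacency eigenvalue. -/
def lambda2 [Fintype V] [DecidableEq V] (G : SimpleGraph V) : ℝ :=
  (eigList G).getD 1 0

/-- `λ(G) = max_{i ≥ 2} |λ_i(G)|`. -/
def lambdaMax [Fintype V] [DecidableEq V] (G : SimpleGraph V) : ℝ :=
  (((eigList G).drop 1).map (fun x => |x|)).foldr max 0

/-- `H` is a `δ`-edge expander: every vertex set `U` has at least
`δ · min(|U|, |Uᶜ|)` edges to its complement. -/
def IsEdgeExpander [Fintype V] (H : SimpleGraph V) (δ : ℝ) : Prop :=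
  ∀ U : Finset V,
    δ * min (U.card : ℝ) (((Finset.univ \ U).card : ℝ)) ≤
      (((U ×ˢ (Finset.univ \ U)).filter (fun p => H.Adj p.1 p.2)).card : ℝ)

/-- The polygraph `G_S` on `V(G)^m`, `m = |S|`: two tuples are adjacent iff
their multiset of coordinatewise distances equals `S`. -/
def polygraph (G : SimpleGraph V) (S : Multiset ℕ) :
    SimpleGraph (Fin (Multiset.card S) → V) where
  Adj x y := x ≠ y ∧
    Multiset.map (fun i => G.dist (x i) (y i)) (Finset.univ.val) = S
  symm := by
    constructor
    rintro x y ⟨hne, h⟩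
    refine ⟨hne.symm, ?_⟩
    have hfun : (fun i => G.dist (y i) (x i)) = fun i => G.dist (x i) (y i) := by
      funext i; exact SimpleGraph.dist_comm
    rw [hfun]; exact h
  loopless := by constructor; rintro x ⟨h, -⟩; exact h rfl

/-- The number of vertices at distance `l` from a fixed vertex of the `d`-regular tree. -/
def Nd (d l : ℕ) : ℕ := if l = 0 then 1 else d * (d - 1) ^ (l - 1)

/-- The multinomial coefficient `m!/(m₁!⋯m_k!)` attached to a multiset `S` of size `m`
whose distinct values have multiplicities `m₁,…,m_k`. -/
def multinom (S : Multiset ℕ) : ℕ :=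
  (Multiset.card S).factorial / ∏ x ∈ S.toFinset, (S.count x).factorial

/-- The Geronimus polynomials (as functions), for parameter `d`. -/
def geronimus (d : ℕ) : ℕ → ℝ → ℝ
  | 0 => fun _ => 1
  | 1 => fun x => x
  | 2 => fun x => x ^ 2 - d
  | (t + 3) => fun x => x * geronimus d (t + 2) x - ((d : ℝ) - 1) * geronimus d (t + 1) x

/-- The graph on `L` where two distinct vertices are adjacent iff they have a
common neighbor in `H`. -/
def commonNbrGraph {W : Type} (H : SimpleGraph W) (L : Set W) : SimpleGraph L where
  Adj x y := x ≠ y ∧ ∃ w : W, H.Adj x w ∧ H.Adj y w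
  symm := by constructor; rintro x y ⟨hne, w, h1, h2⟩; exact ⟨hne.symm, w, h2, h1⟩
  loopless := by constructor; rintro x ⟨h, -⟩; exact h rfl

/-- `w : ℕ → V` describes a non-backtracking walk of length `t` in `G`
(only the values `w 0, …, w t` matter). -/
def IsNBWalk (G : SimpleGraph V) (t : ℕ) (w : ℕ → V) : Prop :=
  (∀ i < t, G.Adj (w i) (w (i + 1))) ∧ ∀ i, 0 < i → i < t → w (i + 1) ≠ w (i - 1)

/-- The graph `H_t` on `V(G)` where distinct `u, v` are adjacent iff there is a
non-backtracking walk of length `t` from `u` to `v` in `G`. -/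
def ntWalkGraph (G : SimpleGraph V) (t : ℕ) : SimpleGraph V :=
  SimpleGraph.fromRel (fun u v => ∃ w : ℕ → V, w 0 = u ∧ w t = v ∧ IsNBWalk G t w)

/-- The auxiliary graph on the edges of `H`: two distinct edges are adjacent iff
their union spans a triangle of `H`. -/
def auxGraph {X : Type} (H : SimpleGraph X) : SimpleGraph H.edgeSet where
  Adj e f := e ≠ f ∧ ∃ x y z : X, H.Adj x y ∧ H.Adj x z ∧ H.Adj y z ∧
      ((e : Sym2 X) = s(x, y) ∨ (e : Sym2 X) = s(x, z) ∨ (e : Sym2 X) = s(y, z)) ∧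
      ((f : Sym2 X) = s(x, y) ∨ (f : Sym2 X) = s(x, z) ∨ (f : Sym2 X) = s(y, z))
  symm := by
    constructor
    rintro e f ⟨hne, x, y, z, h1, h2, h3, he, hf⟩
    exact ⟨hne.symm, x, y, z, h1, h2, h3, hf, he⟩
  loopless := by constructor; rintro e ⟨h, -⟩; exact h rfl

/-- The ordered triangles of a finite graph. -/
def triangleFinset {X : Type} [Fintype X] (H : SimpleGraph X) : Finset (X × X × X) :=
  Finset.univ.filter (fun t => H.Adj t.1 t.2.1 ∧ H.Adj t.1 t.2.2 ∧ H.Adj t.2.1 t.2.2)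

/-- The complete tripartite graph `K_{d,d,d}`. -/
def tripartite (d : ℕ) : SimpleGraph (Fin 3 × Fin d) where
  Adj u v := u.1 ≠ v.1
  symm := ⟨fun _ _ h => Ne.symm h⟩
  loopless := ⟨fun _ h => h rfl⟩


open SimpleGraph
variable {V : Type}

def FW (G : SimpleGraph V) (n : ℕ) (w : ℕ → V) : Prop := ∀ i, i < n → G.Adj (w i) (w (i+1))

lemma FW.mono {G : SimpleGraph V} {n m : ℕ} {w : ℕ → V} (h : FW G n w) (hm : m ≤ n) :
    FW G m w := fun i hi => h i (lt_of_lt_of_le hi hm)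

noncomputable def toWalk (G : SimpleGraph V) (w : ℕ → V) : (n : ℕ) → FW G n w → G.Walk (w 0) (w n)
  | 0, _ => SimpleGraph.Walk.nil
  | (n+1), h => (toWalk G w n (h.mono (Nat.le_succ n))).concat (h n (Nat.lt_succ_self n))

@[simp] lemma toWalk_length (G : SimpleGraph V) (w : ℕ → V) (n : ℕ) (h : FW G n w) :
    (toWalk G w n h).length = n := by
  induction n with
  | zero => rfl
  | succ n ih => simp [toWalk, SimpleGraph.Walk.length_concat, ih]

lemma toWalk_support (G : SimpleGraph V) (w : ℕ → V) (n : ℕ) (h : FW G n w) :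
    (toWalk G w n h).support = (List.range (n+1)).map w := by
  induction n with
  | zero => simp [toWalk, List.range_succ]
  | succ n ih =>
      rw [toWalk, SimpleGraph.Walk.support_concat, ih]
      rw [List.range_succ (n := n+1), List.map_append]
      simp [List.concat_eq_append]

lemma toWalk_edges (G : SimpleGraph V) (w : ℕ → V) (n : ℕ) (h : FW G n w) :
    (toWalk G w n h).edges = (List.range n).map (fun i => s(w i, w (i+1))) := by
  induction n with
  | zero => simp [toWalk]
  | succ n ih =>
      rw [toWalk, SimpleGraph.Walk.edges_concat, ih]
      rw [List.range_succ (n := n), List.map_append]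
      simp [List.concat_eq_append]

lemma FW.dist_le' {G : SimpleGraph V} {n : ℕ} {w : ℕ → V} (h : FW G n w) :
    G.dist (w 0) (w n) ≤ n := by
  simpa using SimpleGraph.dist_le (toWalk G w n h)

lemma FW.reachable {G : SimpleGraph V} {n : ℕ} {w : ℕ → V} (h : FW G n w) :
    G.Reachable (w 0) (w n) := ⟨toWalk G w n h⟩

lemma exists_fw_of_reachable {G : SimpleGraph V} {u v : V} (h : G.Reachable u v) :
    ∃ q : ℕ → V, q 0 = u ∧ q (G.dist u v) = v ∧ FW G (G.dist u v) q := by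
  obtain ⟨p, hp⟩ := h.exists_walk_length_eq_dist
  refine ⟨p.getVert, p.getVert_zero, by rw [← hp]; exact p.getVert_length, ?_⟩
  intro i hi
  exact p.adj_getVert_succ (by omega)

lemma egirth_le_of_cycle {G : SimpleGraph V} {a : V} {c : G.Walk a a} (hc : c.IsCycle) :
    G.egirth ≤ c.length := by
  rw [SimpleGraph.egirth]
  exact iInf_le_of_le a (iInf_le_of_le c (iInf_le _ hc))

lemma backtrack_of_short_closed {G : SimpleGraph V} {L : ℕ} (hL : 0 < L)
    (hg : (L : ℕ∞) < G.egirth) {w : ℕ → V} (hw : FW G L w) (hclosed : w L = w 0) :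
    ∃ i, i + 2 ≤ L ∧ w i = w (i + 2) := by
  classical
  have hP : ∃ t, 0 < t ∧ ∃ a, a + t ≤ L ∧ w a = w (a + t) :=
    ⟨L, hL, 0, by simpa using hclosed.symm⟩
  have hspec := Nat.find_spec hP
  set t := Nat.find hP with htdef
  obtain ⟨ht0, a, haL, heq⟩ := hspec
  have hmin : ∀ t', t' < t → ¬ (0 < t' ∧ ∃ a, a + t' ≤ L ∧ w a = w (a + t')) :=
    fun t' h => Nat.find_min hP h
  have hdist : ∀ i j, a ≤ i → i < j → j ≤ a + t → (i ≠ a ∨ j ≠ a + t) → w i ≠ w j := by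
    intro i j hai hij hj hne hwe
    have hlt : j - i < t := by rcases hne with h | h <;> omega
    exact hmin (j - i) hlt ⟨by omega, i, by omega,
      by rw [show i + (j - i) = j by omega]; exact hwe⟩
  -- rule out t = 1
  have ht1 : t ≠ 1 := by
    intro h1
    exact (hw a (by omega)).ne (by rw [h1] at heq; exact heq)
  rcases Nat.lt_or_ge t 3 with ht3 | ht3
  · -- t = 2
    have ht2 : t = 2 := by omega
    exact ⟨a, by omega, by rw [← ht2]; exact heq⟩
  · -- t ≥ 3 : build a cycle of length t < egirth, contradiction
    exfalso
    have hfw : FW G (t-1) (fun i => w (a+1+i)) := by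
      intro i hi; exact hw (a+1+i) (by omega)
    have e2 : (fun i => w (a+1+i)) (t-1) = w a := by
      show w (a+1+(t-1)) = w a
      rw [show a+1+(t-1) = a + t by omega]; exact heq.symm
    let P1 : G.Walk (w (a+1)) (w a) := (toWalk G (fun i => w (a+1+i)) (t-1) hfw).copy rfl e2
    have hadj : G.Adj (w a) (w (a+1)) := hw a (by omega)
    have hsupp : P1.support = (List.range t).map (fun i => w (a+1+i)) := by
      show ((toWalk G (fun i => w (a+1+i)) (t-1) hfw).copy rfl e2).support = _
      rw [SimpleGraph.Walk.support_copy, toWalk_support]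
      rw [show t - 1 + 1 = t by omega]
    have hedges : P1.edges = (List.range (t-1)).map (fun i => s(w (a+1+i), w (a+2+i))) := by
      show ((toWalk G (fun i => w (a+1+i)) (t-1) hfw).copy rfl e2).edges = _
      rw [SimpleGraph.Walk.edges_copy, toWalk_edges]
      apply List.map_congr_left
      intro i _
      rw [show a+1+(i+1) = a+2+i by omega]
    have hpath : P1.IsPath := by
      apply SimpleGraph.Walk.IsPath.mk'
      rw [hsupp]
      rw [List.nodup_map_iff_inj_on (List.nodup_range : (List.range t).Nodup)]
      intro i hi j hj hww
      simp only [List.mem_range] at hi hj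
      by_contra hne
      rcases Nat.lt_or_ge i j with hij | hij
      · exact hdist (a+1+i) (a+1+j) (by omega) (by omega) (by omega) (by omega) hww
      · exact hdist (a+1+j) (a+1+i) (by omega) (by omega) (by omega) (by omega) hww.symm
    have hnotmem : s(w a, w (a+1)) ∉ P1.edges := by
      rw [hedges]
      intro hmem
      obtain ⟨i, hi, hsym⟩ := List.mem_map.mp hmem
      simp only [List.mem_range] at hi
      rw [Sym2.eq_iff] at hsym
      rcases hsym with ⟨h1, h2⟩ | ⟨h1, h2⟩
      · exact hdist a (a+1+i) (le_refl a) (by omega) (by omega) (by omega) h1.symm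
      · rcases Nat.lt_or_ge (a+2+i) (a+t) with hcase | hcase
        · exact hdist a (a+2+i) (le_refl a) (by omega) (by omega) (by omega) h2.symm
        · -- a+2+i = a+t, so w (a+1+i) = w (a+t-1)
          have hidx : a+1+i = a+t-1 := by omega
          rw [hidx] at h1
          exact hdist (a+1) (a+t-1) (by omega) (by omega) (by omega) (by omega) h1.symm
    have hcyc : (SimpleGraph.Walk.cons hadj P1).IsCycle := by
      rw [SimpleGraph.Walk.cons_isCycle_iff]
      exact ⟨hpath, hnotmem⟩
    have hlen : (SimpleGraph.Walk.cons hadj P1).length = t := by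
      simp only [SimpleGraph.Walk.length_cons]
      show ((toWalk G (fun i => w (a+1+i)) (t-1) hfw).copy rfl e2).length + 1 = t
      rw [SimpleGraph.Walk.length_copy, toWalk_length]
      omega
    have := egirth_le_of_cycle hcyc
    rw [hlen] at this
    have : G.egirth ≤ (L : ℕ∞) := le_trans this (by exact_mod_cast Nat.cast_le.mpr (by omega : t ≤ L))
    exact (not_le.mpr hg) this

/-- A non-backtracking walk in a graph of large girth realizes the distance. -/
lemma nb_dist {G : SimpleGraph V} : ∀ (n : ℕ), ((2*n : ℕ) : ℕ∞) < G.egirth →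
    ∀ w : ℕ → V, FW G n w → (∀ i, i + 2 ≤ n → w i ≠ w (i+2)) → G.dist (w 0) (w n) = n := by
  intro n
  induction n with
  | zero => intro _ w _ _; simp
  | succ m ih =>
    intro hg w hfw hnb
    set n := m + 1 with hn
    by_contra hne
    have hle : G.dist (w 0) (w n) ≤ n := FW.dist_le' hfw
    set j := G.dist (w 0) (w n) with hj
    have hjn : j < n := by omega
    -- geodesic from w n to w 0
    have hreach : G.Reachable (w n) (w 0) := (FW.reachable hfw).symm
    have hdq : G.dist (w n) (w 0) = j := by rw [hj, SimpleGraph.dist_comm]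
    obtain ⟨q, hq0, hqend, hqfw⟩ := exists_fw_of_reachable hreach
    rw [hdq] at hqend hqfw
    -- closed walk
    set c : ℕ → V := fun t => if t ≤ n then w t else q (t - n) with hc
    have hcfw : FW G (n + j) c := by
      intro i hi
      by_cases h1 : i + 1 ≤ n
      · have h0 : i ≤ n := by omega
        simp only [hc, if_pos h1, if_pos h0]
        exact hfw i (by omega)
      · have h0 : ¬ (i ≤ n) ∨ i = n := by omega
        rcases h0 with h0 | h0
        · simp only [hc, if_neg h1, if_neg h0]
          have := hqfw (i - n) (by omega)
          rw [show i - n + 1 = i + 1 - n by omega] at this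
          exact this
        · subst h0
          simp only [hc, if_pos (le_refl n), if_neg h1]
          have := hqfw 0 (by omega)
          rw [hq0] at this
          rw [show n + 1 - n = 1 by omega]
          exact this
    have hcclosed : c (n + j) = c 0 := by
      by_cases hj0 : j = 0
      · simp only [hc, hj0, Nat.add_zero, if_pos (le_refl n), if_pos (Nat.zero_le n)]
        rw [← hq0, ← hqend, hj0]
      · simp only [hc, if_neg (by omega : ¬ (n + j ≤ n)), if_pos (Nat.zero_le n)]
        rw [show n + j - n = j by omega]
        exact hqend
    have hL : ((n + j : ℕ) : ℕ∞) < G.egirth := by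
      refine lt_of_le_of_lt ?_ hg
      exact_mod_cast (by omega : n + j ≤ 2 * n)
    obtain ⟨i, hi2, hieq⟩ := backtrack_of_short_closed (by omega) hL hcfw hcclosed
    rcases (by omega : i + 2 ≤ n ∨ (i = n - 1 ∧ 1 ≤ j) ∨ (n ≤ i ∧ 2 ≤ j)) with hcase | hcase | hcase
    · -- contradicts non-backtracking
      have e1 : c i = w i := by simp only [hc, if_pos (by omega : i ≤ n)]
      have e2 : c (i+2) = w (i+2) := by simp only [hc, if_pos (by omega : i + 2 ≤ n)]
      rw [e1, e2] at hieq
      exact hnb i hcase hieq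
    · -- i = n-1 : w (n-1) = q 1, so dist (w 0) (w (n-1)) ≤ j - 1 ≤ n - 2, contradicting ih
      obtain ⟨hieq', hj1⟩ := hcase
      have e1 : c i = w (n-1) := by
        simp only [hc, if_pos (by omega : i ≤ n)]; rw [hieq']
      have e2 : c (i+2) = q 1 := by
        simp only [hc, if_neg (by omega : ¬ (i + 2 ≤ n))]
        rw [show i + 2 - n = 1 by omega]
      rw [e1, e2] at hieq
      -- walk from q 1 to w 0 of length j - 1
      have hfw2 : FW G (j-1) (fun t => q (1 + t)) := by
        intro i2 hi2'
        have := hqfw (1 + i2) (by omega)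
        exact this
      have hd2 : G.dist (q 1) (q (1 + (j-1))) ≤ j - 1 := FW.dist_le' hfw2
      rw [show 1 + (j-1) = j by omega, hqend] at hd2
      have hdm : G.dist (w 0) (w (n-1)) ≤ j - 1 := by
        rw [hieq, SimpleGraph.dist_comm]; exact hd2
      have hih : G.dist (w 0) (w m) = m := by
        refine ih ?_ w (hfw.mono (by omega)) ?_
        · refine lt_of_le_of_lt ?_ hg
          exact_mod_cast (by omega : 2 * m ≤ 2 * n)
        · intro i2 h2'; exact hnb i2 (by omega)
      rw [show n - 1 = m by omega] at hdm
      omega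
    · -- backtrack inside the geodesic: contradiction with minimality of dist
      obtain ⟨hni, hj2⟩ := hcase
      have e1 : c i = q (i - n) := by
        rcases (by omega : i = n ∨ ¬ (i ≤ n)) with h | h
        · simp only [hc, if_pos (by omega : i ≤ n)]
          rw [h, ← hq0, show n - n = 0 by omega]
        · simp only [hc, if_neg h]
      have e2 : c (i+2) = q (i - n + 2) := by
        simp only [hc, if_neg (by omega : ¬ (i + 2 ≤ n))]
        rw [show i + 2 - n = i - n + 2 by omega]
      rw [e1, e2] at hieq
      -- shorten the geodesic
      set r := i - n with hr
      set q2 : ℕ → V := fun t => if t ≤ r then q t else q (t + 2) with hq2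
      have hfw3 : FW G (j - 2) q2 := by
        intro i2 hi2'
        by_cases h1 : i2 + 1 ≤ r
        · simp only [hq2, if_pos h1, if_pos (by omega : i2 ≤ r)]
          exact hqfw i2 (by omega)
        · rcases (by omega : i2 = r ∨ ¬ (i2 ≤ r)) with h | h
          · simp only [hq2, if_pos (by omega : i2 ≤ r), if_neg h1]
            rw [h, hieq]
            exact hqfw (r + 2) (by omega)
          · simp only [hq2, if_neg h, if_neg h1]
            exact hqfw (i2 + 2) (by omega)
      have : G.dist (q2 0) (q2 (j-2)) ≤ j - 2 := FW.dist_le' hfw3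
      have e3 : q2 0 = w n := by simp only [hq2, if_pos (Nat.zero_le r)]; exact hq0
      have e4 : q2 (j-2) = w 0 := by
        rcases (by omega : j - 2 ≤ r ∨ ¬ (j - 2 ≤ r)) with h | h
        · have hr2 : j - 2 = r := by omega
          simp only [hq2, if_pos h]
          rw [hr2, hieq, show r + 2 = j by omega]
          exact hqend
        · simp only [hq2, if_neg h]
          rw [show j - 2 + 2 = j by omega]
          exact hqend
      have hfin : G.dist (w n) (w 0) ≤ j - 2 := by rw [← e3, ← e4]; exact this
      rw [hdq] at hfin
      omega

section Moves
variable {G : SimpleGraph V}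

noncomputable def nbSeq (G : SimpleGraph V) (ex : ∀ v a b : V, ∃ x, G.Adj v x ∧ x ≠ a ∧ x ≠ b)
    (y a b : V) : ℕ → V
  | 0 => y
  | 1 => Classical.choose (ex y a b)
  | (n+2) => Classical.choose (ex (nbSeq G ex y a b (n+1)) (nbSeq G ex y a b n) (nbSeq G ex y a b n))

variable {ex : ∀ v a b : V, ∃ x, G.Adj v x ∧ x ≠ a ∧ x ≠ b} {y a b : V}

lemma nbSeq_adj : ∀ n, G.Adj (nbSeq G ex y a b n) (nbSeq G ex y a b (n+1))
  | 0 => (Classical.choose_spec (ex y a b)).1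
  | (n+1) => (Classical.choose_spec (ex (nbSeq G ex y a b (n+1)) (nbSeq G ex y a b n)
      (nbSeq G ex y a b n))).1

lemma nbSeq_nb (n : ℕ) : nbSeq G ex y a b (n+2) ≠ nbSeq G ex y a b n :=
  (Classical.choose_spec (ex (nbSeq G ex y a b (n+1)) (nbSeq G ex y a b n)
      (nbSeq G ex y a b n))).2.1

lemma nbSeq_one_ne_left : nbSeq G ex y a b 1 ≠ a := (Classical.choose_spec (ex y a b)).2.1

lemma nbSeq_one_ne_right : nbSeq G ex y a b 1 ≠ b := (Classical.choose_spec (ex y a b)).2.2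

lemma nbSeq_fw (n : ℕ) : FW G n (nbSeq G ex y a b) := fun i _ => nbSeq_adj i

/-- M1 : there is a vertex at any prescribed distance. -/
lemma exists_at_dist (ex : ∀ v a b : V, ∃ x, G.Adj v x ∧ x ≠ a ∧ x ≠ b) {k : ℕ}
    (hgk : ((2*k : ℕ) : ℕ∞) < G.egirth) (u : V) : ∃ z, G.dist u z = k := by
  refine ⟨nbSeq G ex u u u k, ?_⟩
  have := nb_dist k hgk (nbSeq G ex u u u) (nbSeq_fw k) (fun i hi => (nbSeq_nb (G := G) (ex := ex) (y := u) (a := u) (b := u) i).symm)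
  simpa [nbSeq] using this

/-- M2 : equidistant vertex from the two endpoints of a path of length 2. -/
lemma exists_equidist (ex : ∀ v a b : V, ∃ x, G.Adj v x ∧ x ≠ a ∧ x ≠ b) {k : ℕ}
    (hk : 1 ≤ k) (hgk : ((2*k : ℕ) : ℕ∞) < G.egirth) {u z y : V}
    (huy : G.Adj u y) (hyz : G.Adj y z) :
    ∃ w, G.dist u w = k ∧ G.dist z w = k := by
  set q := nbSeq G ex y u z with hq
  have key : ∀ v : V, G.Adj v y → v ≠ q 1 → G.dist v (q (k-1)) = k := by
    intro v hv hvq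
    set W : ℕ → V := fun t => if t = 0 then v else q (t-1) with hW
    have hfw : FW G k W := by
      intro i hi
      rcases Nat.eq_zero_or_pos i with h0 | h0
      · subst h0
        simp only [hW, if_pos rfl, if_neg (by omega : ¬ (1 = 0))]
        exact hv
      · simp only [hW, if_neg (by omega : ¬ (i = 0)), if_neg (by omega : ¬ (i + 1 = 0))]
        have := nbSeq_adj (G := G) (ex := ex) (y := y) (a := u) (b := z) (i-1)
        rw [show i - 1 + 1 = i + 1 - 1 by omega] at this
        exact this
    have hnb : ∀ i, i + 2 ≤ k → W i ≠ W (i+2) := by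
      intro i hi
      rcases Nat.eq_zero_or_pos i with h0 | h0
      · subst h0
        simp only [hW, if_pos rfl, if_neg (by omega : ¬ (0 + 2 = 0))]
        exact hvq
      · simp only [hW, if_neg (by omega : ¬ (i = 0)), if_neg (by omega : ¬ (i + 2 = 0))]
        have := nbSeq_nb (G := G) (ex := ex) (y := y) (a := u) (b := z) (i-1)
        rw [show i - 1 + 2 = i + 2 - 1 by omega] at this
        exact this.symm
    have := nb_dist k hgk W hfw hnb
    have hW0 : W 0 = v := by simp [hW]
    have hWk : W k = q (k-1) := by simp only [hW, if_neg (by omega : ¬ (k = 0))]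
    rw [hW0, hWk] at this
    exact this
  refine ⟨q (k-1), key u huy (Ne.symm nbSeq_one_ne_left), key z hyz.symm (Ne.symm nbSeq_one_ne_right)⟩

end Moves

section Parity

lemma coloring_even_iff {α : Type} {H : SimpleGraph α} (C : H.Coloring (Fin 2)) :
    ∀ {a b : α} (p : H.Walk a b), (Even p.length ↔ C a = C b) := by
  intro a b p
  induction p with
  | nil => simp
  | @cons u v w h p ih =>
      have hne : C u ≠ C v := C.valid h
      simp only [SimpleGraph.Walk.length_cons]
      rw [Nat.even_add_one, ih]
      exact (by decide : ∀ x y z : Fin 2, x ≠ y → (¬ (y = z) ↔ x = z)) _ _ _ hne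

lemma exists_odd_closed_walk {α : Type} {H : SimpleGraph α} (hconn : H.Connected)
    (hnb : ¬ H.Colorable 2) : ∃ (v : α) (c : H.Walk v v), Odd c.length := by
  by_contra h
  push_neg at h
  obtain ⟨v0⟩ := hconn.nonempty
  refine hnb ⟨SimpleGraph.Coloring.mk
    (fun v => (⟨H.dist v0 v % 2, Nat.mod_lt _ (by omega)⟩ : Fin 2)) ?_⟩
  intro u v huv heq
  have hmod : H.dist v0 u % 2 = H.dist v0 v % 2 := by
    simpa [Fin.ext_iff] using heq
  obtain ⟨p, hp⟩ := (hconn.preconnected v0 u).exists_walk_length_eq_dist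
  obtain ⟨q, hq⟩ := (hconn.preconnected v0 v).exists_walk_length_eq_dist
  have hodd : Odd ((p.append (SimpleGraph.Walk.cons huv q.reverse)).length) := by
    rw [SimpleGraph.Walk.length_append, SimpleGraph.Walk.length_cons,
      SimpleGraph.Walk.length_reverse, hp, hq, Nat.odd_iff]
    omega
  exact (h v0 _) hodd

def EvenReach {α : Type} (H : SimpleGraph α) (x y : α) : Prop :=
  ∃ p : H.Walk x y, Even p.length

lemma EvenReach.trans {α : Type} {H : SimpleGraph α} {x y z : α}
    (h1 : EvenReach H x y) (h2 : EvenReach H y z) : EvenReach H x z := by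
  obtain ⟨p, hp⟩ := h1; obtain ⟨q, hq⟩ := h2
  exact ⟨p.append q, by rw [SimpleGraph.Walk.length_append]; exact hp.add hq⟩

lemma even_conn {α : Type} {H : SimpleGraph α} (hconn : H.Connected) (hnb : ¬ H.Colorable 2)
    (a b : α) : ∃ p : H.Walk a b, Even p.length := by
  obtain ⟨v0, c, hc⟩ := exists_odd_closed_walk hconn hnb
  obtain ⟨w⟩ := hconn.preconnected a b
  by_cases hw : Even w.length
  · exact ⟨w, hw⟩
  · obtain ⟨r⟩ := hconn.preconnected a v0
    refine ⟨(r.append (c.append r.reverse)).append w, ?_⟩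
    simp only [SimpleGraph.Walk.length_append, SimpleGraph.Walk.length_reverse]
    have h1 := Nat.odd_iff.mp hc
    have h2 := Nat.odd_iff.mp (Nat.not_even_iff_odd.mp hw)
    rw [Nat.even_iff]
    omega

lemma exists_nbr [Fintype V] {G : SimpleGraph V} {d : ℕ} (hd : 3 ≤ d)
    (hreg : ∀ v : V, (Finset.univ.filter (fun u => G.Adj v u)).card = d) :
    ∀ v a b : V, ∃ x, G.Adj v x ∧ x ≠ a ∧ x ≠ b := by
  classical
  intro v a b
  by_contra h
  push_neg at h
  have hsub : (Finset.univ.filter (fun u => G.Adj v u)) ⊆ {a, b} := by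
    intro x hx
    simp only [Finset.mem_filter, Finset.mem_univ, true_and] at hx
    by_cases hxa : x = a
    · simp [hxa]
    · simp [h x hx hxa]
  have hcard := Finset.card_le_card hsub
  rw [hreg v] at hcard
  have : ({a, b} : Finset V).card ≤ 2 :=
    le_trans (Finset.card_insert_le a {b}) (by simp)
  omega

end Parity


section Poly
variable {G : SimpleGraph V} {S : Multiset ℕ}

lemma exists_enum (S : Multiset ℕ) :
    ∃ f : Fin (Multiset.card S) → ℕ, Multiset.map f Finset.univ.val = S := by
  refine ⟨fun i => S.toList.get (Fin.cast (Multiset.length_toList S).symm i), ?_⟩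
  rw [Fin.univ_val_map]
  have h1 : List.ofFn (fun i => S.toList.get (Fin.cast (Multiset.length_toList S).symm i))
      = S.toList := by
    apply List.ext_get
    · simp
    · intro n h1 h2
      simp [List.get_ofFn]
  rw [h1, Multiset.coe_toList]

lemma polygraph_adj_of {x y : Fin (Multiset.card S) → V} (g : Fin (Multiset.card S) → ℕ)
    (hg : Multiset.map g Finset.univ.val = S)
    (hd : ∀ i, G.dist (x i) (y i) = g i) (i0 : Fin (Multiset.card S)) (h0 : 0 < g i0) :
    (polygraph G S).Adj x y := by
  refine ⟨fun he => ?_, ?_⟩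
  · have := hd i0
    rw [he, SimpleGraph.dist_self] at this
    omega
  · rw [Multiset.map_congr rfl (fun i _ => hd i)]
    exact hg

lemma two_step (hconn : G.Connected)
    (ex : ∀ v a b : V, ∃ x, G.Adj v x ∧ x ≠ a ∧ x ≠ b)
    (hS : ∃ s ∈ S, 0 < s) (hgirth : ((3 * S.sup : ℕ) : ℕ∞) < G.egirth)
    (x : Fin (Multiset.card S) → V) (i0 : Fin (Multiset.card S)) (z : V)
    (h2 : G.dist (x i0) z = 2) :
    ∃ y, (polygraph G S).Adj x y ∧ (polygraph G S).Adj y (Function.update x i0 z) := by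
  classical
  have hgk : ∀ k : ℕ, k ≤ S.sup → ((2*k : ℕ) : ℕ∞) < G.egirth := by
    intro k hk
    refine lt_of_le_of_lt ?_ hgirth
    exact_mod_cast Nat.cast_le.mpr (by omega : 2*k ≤ 3 * S.sup)
  obtain ⟨f, hf⟩ := exists_enum S
  obtain ⟨spos, hsmem, hspos⟩ := hS
  obtain ⟨iP, hiP⟩ : ∃ i, f i = spos := by
    have : spos ∈ Multiset.map f Finset.univ.val := by rw [hf]; exact hsmem
    obtain ⟨i, _, h⟩ := Multiset.mem_map.mp this
    exact ⟨i, h⟩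
  set g : Fin (Multiset.card S) → ℕ := f ∘ (Equiv.swap i0 iP) with hgdef
  have hgS : Multiset.map g Finset.univ.val = S := by
    rw [hgdef, ← Multiset.map_map, Multiset.map_univ_val_equiv, hf]
  have hg0 : 0 < g i0 := by
    have : g i0 = f iP := by rw [hgdef]; simp [Equiv.swap_apply_left]
    omega
  have hgle : ∀ i, g i ≤ S.sup := by
    intro i
    refine Multiset.le_sup ?_
    rw [← hgS]
    exact Multiset.mem_map_of_mem _ (Finset.mem_univ_val i)
  have H : ∀ i, ∃ w, G.dist (x i) w = g i ∧ G.dist (Function.update x i0 z i) w = g i := by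
    intro i
    by_cases hi : i = i0
    · subst hi
      rw [Function.update_self]
      obtain ⟨q, hq0, hq2, hqfw⟩ := exists_fw_of_reachable (hconn.preconnected (x i) z)
      rw [h2] at hq2 hqfw
      have hadj1 : G.Adj (x i) (q 1) := by
        have := hqfw 0 (by omega); rwa [hq0] at this
      have hadj2 : G.Adj (q 1) z := by
        have := hqfw 1 (by omega); rwa [hq2] at this
      exact exists_equidist ex (by omega : 1 ≤ g i) (hgk _ (hgle i)) hadj1 hadj2
    · rw [Function.update_of_ne hi]
      obtain ⟨w, hw⟩ := exists_at_dist ex (hgk _ (hgle i)) (x i)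
      exact ⟨w, hw, hw⟩
  choose y hy1 hy2 using H
  refine ⟨y, polygraph_adj_of g hgS hy1 i0 hg0,
    polygraph_adj_of g hgS (fun i => by rw [SimpleGraph.dist_comm]; exact hy2 i) i0 hg0⟩

lemma reach_update (hconn : G.Connected)
    (ex : ∀ v a b : V, ∃ x, G.Adj v x ∧ x ≠ a ∧ x ≠ b)
    (hS : ∃ s ∈ S, 0 < s) (hgirth : ((3 * S.sup : ℕ) : ℕ∞) < G.egirth) :
    ∀ (n : ℕ) (a b : V) (p : G.Walk a b), p.length = 2 * n →
    ∀ (x : Fin (Multiset.card S) → V) (i0 : Fin (Multiset.card S)), x i0 = a →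
      EvenReach (polygraph G S) x (Function.update x i0 b) := by
  intro n
  induction n with
  | zero =>
      intro a b p hp x i0 hx
      have hab : a = b := SimpleGraph.Walk.eq_of_length_eq_zero (p := p) (by omega)
      subst hab
      rw [← hx, Function.update_eq_self]
      exact ⟨SimpleGraph.Walk.nil, Even.zero⟩
  | succ nn ih =>
      intro a b p hp x i0 hx
      cases p with
      | nil => simp at hp
      | @cons _ c _ h1 p1 =>
        cases p1 with
        | nil =>
            simp only [SimpleGraph.Walk.length_cons, SimpleGraph.Walk.length_nil] at hp
            omega
        | @cons _ dd _ h2 p2 =>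
          have hp2 : p2.length = 2 * nn := by
            simp only [SimpleGraph.Walk.length_cons] at hp; omega
          by_cases hda : dd = a
          · exact ih a b (p2.copy hda rfl) (by simpa using hp2) x i0 hx
          · have hd2 : G.dist a dd = 2 := by
              have hle : G.dist a dd ≤ 2 := by
                have := SimpleGraph.dist_le
                  (SimpleGraph.Walk.cons h1 (SimpleGraph.Walk.cons h2 SimpleGraph.Walk.nil))
                simpa using this
              have h0 : G.dist a dd ≠ 0 := by
                intro hzero
                exact hda (hconn.dist_eq_zero_iff.mp hzero).symm
              have hone : G.dist a dd ≠ 1 := by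
                intro hone
                have hadj : G.Adj a dd := SimpleGraph.dist_eq_one_iff_adj.mp hone
                set tw : ℕ → V := fun t => if t = 0 then a else if t = 1 then c
                  else if t = 2 then dd else a with htw
                have hfw : FW G 3 tw := by
                  intro i hi
                  interval_cases i
                  · simpa [htw] using h1
                  · simpa [htw] using h2
                  · simpa [htw] using hadj.symm
                have hcl : tw 3 = tw 0 := by simp [htw]
                have h3g : ((3:ℕ) : ℕ∞) < G.egirth := by
                  refine lt_of_le_of_lt ?_ hgirth
                  obtain ⟨spos, hsmem, hspos⟩ := hS
                  have : spos ≤ S.sup := Multiset.le_sup hsmem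
                  exact_mod_cast Nat.cast_le.mpr (by omega : 3 ≤ 3 * S.sup)
                obtain ⟨i, hi, he⟩ := backtrack_of_short_closed (by omega) h3g hfw hcl
                rcases (by omega : i = 0 ∨ i = 1) with hieq | hieq <;> subst hieq
                · rw [show tw 0 = a from rfl, show tw 2 = dd from rfl] at he
                  exact hda he.symm
                · rw [show tw 1 = c from rfl, show tw 3 = a from rfl] at he
                  exact h1.ne' he
              omega
            obtain ⟨y, ha1, ha2⟩ := two_step hconn ex hS hgirth x i0 dd
              (by rw [hx]; exact hd2)
            have hrest := ih dd b p2 hp2 (Function.update x i0 dd) i0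
              (Function.update_self i0 dd x)
            rw [Function.update_idem] at hrest
            refine EvenReach.trans ⟨SimpleGraph.Walk.cons ha1
              (SimpleGraph.Walk.cons ha2 SimpleGraph.Walk.nil), ?_⟩ hrest
            simp

lemma even_reach_all (hconn : G.Connected) (hnbip : ¬ G.Colorable 2)
    (ex : ∀ v a b : V, ∃ x, G.Adj v x ∧ x ≠ a ∧ x ≠ b)
    (hS : ∃ s ∈ S, 0 < s) (hgirth : ((3 * S.sup : ℕ) : ℕ∞) < G.egirth)
    (x y : Fin (Multiset.card S) → V) : EvenReach (polygraph G S) x y := by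
  classical
  suffices h : ∀ T : Finset (Fin (Multiset.card S)), ∀ x y : Fin (Multiset.card S) → V,
      (∀ i, i ∉ T → x i = y i) → EvenReach (polygraph G S) x y by
    exact h Finset.univ x y (fun i hi => absurd (Finset.mem_univ i) hi)
  intro T
  induction T using Finset.induction_on with
  | empty =>
      intro x y hxy
      have hxy' : x = y := funext fun i => hxy i (Finset.notMem_empty i)
      rw [hxy']
      exact ⟨SimpleGraph.Walk.nil, Even.zero⟩
  | @insert a T ha ih =>
      intro x y hxy
      have h1 : EvenReach (polygraph G S) x (Function.update x a (y a)) := by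
        obtain ⟨p, hp⟩ := even_conn hconn hnbip (x a) (y a)
        obtain ⟨r, hr⟩ := hp
        exact reach_update hconn ex hS hgirth r (x a) (y a) p (by omega) x a rfl
      refine h1.trans (ih (Function.update x a (y a)) y ?_)
      intro i hi
      by_cases hia : i = a
      · subst hia; simp
      · rw [Function.update_of_ne hia]
        exact hxy i (by simp [hia, hi])

end Poly


theorem statement8 (d : ℕ) (hd : 3 ≤ d) (S : Multiset ℕ) (hS : ∃ s ∈ S, 0 < s)
    {V : Type} [Fintype V] (G : SimpleGraph V)
    (hconn : G.Connected) (hnb : ¬ G.Colorable 2)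
    (hreg : ∀ v, degR G v = d)
    (hgirth : ((3 * S.sup : ℕ) : ℕ∞) < G.egirth) :
    (polygraph G S).Connected ∧ ¬ (polygraph G S).Colorable 2 := by
  have ex : ∀ v a b : V, ∃ x, G.Adj v x ∧ x ≠ a ∧ x ≠ b := exists_nbr hd hreg
  obtain ⟨v0⟩ := hconn.nonempty
  have hgk : ∀ k : ℕ, k ≤ S.sup → ((2*k : ℕ) : ℕ∞) < G.egirth := by
    intro k hk
    refine lt_of_le_of_lt ?_ hgirth
    exact_mod_cast Nat.cast_le.mpr (by omega : 2*k ≤ 3 * S.sup)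
  constructor
  · have hne : Nonempty (Fin (Multiset.card S) → V) := ⟨fun _ => v0⟩
    refine SimpleGraph.Connected.mk ?_
    intro x y
    obtain ⟨p, _⟩ := even_reach_all hconn hnb ex hS hgirth x y
    exact ⟨p⟩
  · rintro ⟨C⟩
    obtain ⟨f, hf⟩ := exists_enum S
    obtain ⟨spos, hsmem, hspos⟩ := hS
    obtain ⟨iP, hiP⟩ : ∃ i, f i = spos := by
      have : spos ∈ Multiset.map f Finset.univ.val := by rw [hf]; exact hsmem
      obtain ⟨i, _, h⟩ := Multiset.mem_map.mp this
      exact ⟨i, h⟩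
    have hfle : ∀ i, f i ≤ S.sup := fun i => Multiset.le_sup
      (by rw [← hf]; exact Multiset.mem_map_of_mem _ (Finset.mem_univ_val i))
    have H : ∀ i : Fin (Multiset.card S), ∃ w, G.dist v0 w = f i :=
      fun i => exists_at_dist ex (hgk _ (hfle i)) v0
    choose y hy using H
    have hadj : (polygraph G S).Adj (fun _ => v0) y :=
      polygraph_adj_of f hf (fun i => hy i) iP (by omega)
    obtain ⟨q, hq⟩ := even_reach_all hconn hnb ex ⟨spos, hsmem, hspos⟩ hgirth y (fun _ => v0)
    have heven := (coloring_even_iff C (SimpleGraph.Walk.cons hadj q)).mpr rfl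
    simp only [SimpleGraph.Walk.length_cons] at heven
    rw [Nat.even_add_one] at heven
    exact heven hq


end PaperStmt
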